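/- Let C_X, C_Z ⊆ F₂^N be subspaces with C_X^⊥ ⊆ C_Z and let x ∈ C_Z \ C_X^⊥. Then Nat.card {b ∈ C_Z | ∃ x' ∈ x + C_X^⊥, ∀ i ∈ supp(x'), b i = 1} ≤ Nat.card C_Z − 1. Consequently, if dim C_Z = N − j (so that the code has j independent Z-stabilizer generators), the loss-free logical Bell-measurement efficiency with only ZZ=1 Bell measurements is at most 1 − 2^{−(N−j)}. -/

import Mathlib

def pairing {N : ℕ} (u v : Fin N → ZMod 2) : ZMod 2 := ∑ i, u i * v i

def dualCode {N : ℕ} (C : Submodule (ZMod 2) (Fin N → ZMod 2)) :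
    Submodule (ZMod 2) (Fin N → ZMod 2) where
  carrier := {u | ∀ c ∈ C, pairing u c = 0}
  add_mem' := by
    intro a b ha hb c hc
    have h : pairing (a + b) c = pairing a c + pairing b c := by
      simp [pairing, add_mul, Finset.sum_add_distrib]
    simp only [Set.mem_setOf_eq] at *
    rw [h, ha c hc, hb c hc, add_zero]
  zero_mem' := by
    intro c hc
    simp [pairing]
  smul_mem' := by
    intro r a ha c hc
    have h : pairing (r • a) c = r * pairing a c := by
      simp [pairing, Finset.mul_sum, mul_assoc]
    simp only [Set.mem_setOf_eq] at *
    rw [h, ha c hc, mul_zero]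

/-- Theorem 4: with only ZZ=1 Bell measurements, at least one ZZ-outcome string (the
all-zero codeword) fails, so the loss-free logical Bell-measurement efficiency of a CSS
code with j independent Z-stabilizer generators is at most 1 − 2^{−(N−j)}. -/
theorem css_zz1_upper_bound (N : ℕ)
    (CX CZ : Submodule (ZMod 2) (Fin N → ZMod 2))
    (hCSS : dualCode CX ≤ CZ)
    (x : Fin N → ZMod 2) (hx : x ∈ CZ) (hx' : x ∉ dualCode CX) :
    Nat.card {b : Fin N → ZMod 2 | b ∈ CZ ∧
        ∃ x' : Fin N → ZMod 2, x' - x ∈ dualCode CX ∧ ∀ i, x' i = 1 → b i = 1}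
      ≤ Nat.card CZ - 1 ∧
    (∀ j : ℕ, j ≤ N → Module.finrank (ZMod 2) CZ = N - j →
      (Nat.card {b : Fin N → ZMod 2 | b ∈ CZ ∧
          ∃ x' : Fin N → ZMod 2, x' - x ∈ dualCode CX ∧ ∀ i, x' i = 1 → b i = 1} : ℝ)
        / (Nat.card CZ : ℝ)
        ≤ 1 - (2 : ℝ) ^ (-((N : ℤ) - (j : ℤ)))) := by
  set S : Set (Fin N → ZMod 2) := {b : Fin N → ZMod 2 | b ∈ CZ ∧
      ∃ x' : Fin N → ZMod 2, x' - x ∈ dualCode CX ∧ ∀ i, x' i = 1 → b i = 1} with hS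
  have h2 : ∀ a : ZMod 2, a = 0 ∨ a = 1 := by decide
  have hsub : S ⊆ (CZ : Set (Fin N → ZMod 2)) \ {0} := by
    rintro b ⟨hbCZ, x', hx'd, hcov⟩
    refine ⟨hbCZ, ?_⟩
    intro hb0
    simp only [Set.mem_singleton_iff] at hb0
    subst hb0
    have hx'0 : x' = 0 := funext fun i => (h2 (x' i)).resolve_right
      (fun h1 => by simpa using hcov i h1)
    apply hx'
    have hneg : (0 : Fin N → ZMod 2) - x ∈ dualCode CX := by rw [← hx'0]; exact hx'd
    simpa using neg_mem hneg
  have hcard1 : Nat.card S ≤ Nat.card CZ - 1 := by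
    have h1 : Nat.card S = S.ncard := Nat.card_coe_set_eq S
    have h2' : Nat.card CZ = (CZ : Set (Fin N → ZMod 2)).ncard :=
      Nat.card_coe_set_eq (CZ : Set (Fin N → ZMod 2))
    rw [h1, h2']
    calc S.ncard ≤ ((CZ : Set (Fin N → ZMod 2)) \ {0}).ncard :=
          Set.ncard_le_ncard hsub (Set.toFinite _)
      _ ≤ (CZ : Set (Fin N → ZMod 2)).ncard - 1 := by
          rw [Set.ncard_diff_singleton_of_mem (Submodule.zero_mem CZ)]
  refine ⟨hcard1, ?_⟩
  intro j hjN hrank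
  letI : Fintype ↥CZ := Fintype.ofFinite _
  have hcardCZ : Nat.card CZ = 2 ^ (N - j) := by
    rw [Nat.card_eq_fintype_card, Module.card_eq_pow_finrank (K := ZMod 2), ZMod.card, hrank]
  have hposn : 0 < Nat.card CZ := by rw [hcardCZ]; positivity
  have hpos : (0 : ℝ) < (Nat.card CZ : ℝ) := by exact_mod_cast hposn
  rw [div_le_iff₀ hpos]
  have hle : (Nat.card S : ℝ) ≤ (Nat.card CZ : ℝ) - 1 := by
    have hn : Nat.card S + 1 ≤ Nat.card CZ := by omega
    have := (Nat.cast_le (α := ℝ)).mpr hn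
    push_cast at this
    linarith
  have hzpow : (2 : ℝ) ^ (-((N : ℤ) - (j : ℤ))) = 1 / (Nat.card CZ : ℝ) := by
    rw [hcardCZ, zpow_neg, one_div]
    congr 1
    have he : ((N : ℤ) - (j : ℤ)) = ((N - j : ℕ) : ℤ) := by omega
    rw [he, zpow_natCast]
    push_cast
    ring
  rw [hzpow]
  have heq : (1 - 1 / (Nat.card CZ : ℝ)) * (Nat.card CZ : ℝ) = (Nat.card CZ : ℝ) - 1 := by
    field_simp
  rw [heq]
  exact hle
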